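/- Let G and H be finite groups with |G| = |H|. Suppose that for every integer n with 1 ≤ n ≤ |G|, the sum over all n-tuples (χ₁,…,χₙ) of irreducible complex characters of G of the multiplicity of the trivial character in the product χ₁²·χ₂²⋯χₙ² equals the corresponding sum for H. Then the multiset of sizes of real conjugacy classes of G equals the multiset of sizes of real conjugacy classes of H. -/

import Mathlib

open scoped BigOperators Classical

noncomputable section

/-- `χ : G → ℂ` is an irreducible complex character of `G`, i.e. the character of some
simple (irreducible) finite-dimensional complex representation. -/
def IsIrrChar (G : Type) [Group G] (χ : G → ℂ) : Prop :=
  ∃ V : FDRep ℂ G, CategoryTheory.Simple V ∧ FDRep.character V = χ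

/-- The inner product `[α, β] = (1/|G|) ∑ g, α g * conj (β g)` of complex-valued
class functions on a finite group. -/
def charInner (G : Type) [Group G] [Fintype G] (α β : G → ℂ) : ℂ :=
  (Fintype.card G : ℂ)⁻¹ * ∑ g : G, α g * (starRingEnd ℂ) (β g)

/-- A conjugacy class is real if its elements are conjugate to their inverses. -/
def IsRealClass (G : Type) [Group G] (C : ConjClasses G) : Prop :=
  ∀ g ∈ C.carrier, IsConj g g⁻¹

/-- The multiset of sizes of the real conjugacy classes of a finite group. -/
def realClassSizes (G : Type) [Group G] [Fintype G] : Multiset ℕ :=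
  ((Finset.univ : Finset (ConjClasses G)).filter fun C => IsRealClass G C).val.map
    fun C => C.carrier.ncard


open CategoryTheory

lemma orth' {G' : GrpCat} [Fintype G'] (V W : FDRep ℂ G') [Simple V] [Simple W] :
    ∑ g : G', V.character g * W.character g⁻¹ =
      if Nonempty (V ≅ W) then (Fintype.card G' : ℂ) else 0 := by
  haveI : Invertible ((Nat.card G' : ℂ)) :=
    invertibleOfNonzero (by rw [Nat.card_eq_fintype_card]; exact_mod_cast Nat.cast_ne_zero.mpr Fintype.card_ne_zero)
  have h := FDRep.char_orthonormal (k := ℂ) V W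
  rw [← smul_eq_mul, ← invOf_eq_inv, invOf_smul_eq_iff, Nat.card_eq_fintype_card] at h
  rw [h]
  simp [smul_eq_mul, mul_ite]

variable (G : Type) [Group G] [Fintype G]

lemma card_ne_zero_C : (Fintype.card G : ℂ) ≠ 0 := by
  exact_mod_cast Nat.cast_ne_zero.mpr Fintype.card_ne_zero

lemma orth_full {χ ψ : G → ℂ} (hχ : IsIrrChar G χ) (hψ : IsIrrChar G ψ) :
    ∑ g : G, χ g * ψ g⁻¹ = if χ = ψ then (Fintype.card G : ℂ) else 0 := by
  obtain ⟨V, hV, rfl⟩ := hχ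
  obtain ⟨W, hW, rfl⟩ := hψ
  have key : ∀ (V' W' : FDRep ℂ G) (_ : Simple V') (_ : Simple W'),
      ∑ g : G, V'.character g * W'.character g⁻¹ =
        if Nonempty (V' ≅ W') then (Fintype.card G : ℂ) else 0 := by
    intro V' W' h1 h2
    exact @orth' (GrpCat.of G) ‹Fintype G› V' W' h1 h2
  by_cases hiso : Nonempty (V ≅ W)
  · rw [key V W hV hW, if_pos hiso, if_pos (FDRep.char_iso hiso.some)]
  · rw [key V W hV hW, if_neg hiso, if_neg]
    intro hEq
    have h3 := key V V hV hV
    rw [if_pos ⟨Iso.refl V⟩] at h3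
    have h4 := key V W hV hW
    rw [← hEq, h3, if_neg hiso] at h4
    exact card_ne_zero_C G h4

lemma irr_finite : {χ : G → ℂ | IsIrrChar G χ}.Finite := by
  have hli : LinearIndependent ℂ (fun χ : {χ : G → ℂ | IsIrrChar G χ} => (χ : G → ℂ)) := by
    rw [linearIndependent_iff']
    intro s a hsum i hi
    have h : ∑ χ ∈ s, a χ * ∑ g : G, (χ : G → ℂ) g * (i : G → ℂ) g⁻¹ = 0 := by
      have : ∑ χ ∈ s, a χ * ∑ g : G, (χ : G → ℂ) g * (i : G → ℂ) g⁻¹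
          = ∑ g : G, (∑ χ ∈ s, a χ • (χ : G → ℂ)) g * (i : G → ℂ) g⁻¹ := by
        simp only [Finset.sum_apply, Pi.smul_apply, smul_eq_mul, Finset.sum_mul]
        rw [Finset.sum_comm]
        simp [Finset.mul_sum, mul_assoc]
      rw [this, hsum]
      simp
    have h2 : ∀ χ ∈ s, a χ * ∑ g : G, (χ : G → ℂ) g * (i : G → ℂ) g⁻¹
        = if χ = i then a χ * (Fintype.card G : ℂ) else 0 := by
      intro χ _
      rw [orth_full G χ.2 i.2]
      by_cases hc : χ = i
      · rw [if_pos hc, if_pos (by rw [hc])]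
      · rw [if_neg (fun hcc => hc (Subtype.coe_injective hcc)), if_neg hc, mul_zero]
    rw [Finset.sum_congr rfl h2, Finset.sum_ite_eq' s i (fun χ => a χ * _), if_pos hi] at h
    exact (mul_eq_zero.mp h).resolve_right (card_ne_zero_C G)
  exact hli.setFinite

/-- the finset of irreducible characters -/
def irrChars : Finset (G → ℂ) := (irr_finite G).toFinset

lemma mem_irrChars {χ : G → ℂ} : χ ∈ irrChars G ↔ IsIrrChar G χ := by
  simp [irrChars]

section Span
variable {G : Type} [Group G] [Fintype G]

open Module

lemma stepA (f : G → ℂ) (V : FDRep ℂ G) [Simple V]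
    (hf : ∀ h g : G, f (h * g * h⁻¹) = f g)
    (h0 : ∑ g : G, f g * V.character g⁻¹ = 0) :
    (∑ g : G, f g • (V.ρ g⁻¹ : V →ₗ[ℂ] V)) = 0 := by
  set T : V →ₗ[ℂ] V := ∑ g : G, f g • (V.ρ g⁻¹ : V →ₗ[ℂ] V) with hT
  have comm : ∀ h : G, T ∘ₗ V.ρ h = V.ρ h ∘ₗ T := by
    intro h
    ext v
    simp only [LinearMap.comp_apply, hT, LinearMap.sum_apply, LinearMap.smul_apply, map_sum,
      map_smul]
    refine Fintype.sum_equiv (MulAut.conj h⁻¹).toEquiv _ _ (fun g => ?_)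
    have he : (MulAut.conj h⁻¹).toEquiv g = h⁻¹ * g * h := by
      simp [MulAut.conj_apply]
    rw [he]
    have hfe : f (h⁻¹ * g * h) = f g := by
      have := hf h⁻¹ g
      rwa [inv_inv] at this
    rw [hfe]
    have h1 : (V.ρ h) ((V.ρ (h⁻¹ * g * h)⁻¹) v) = (V.ρ g⁻¹) ((V.ρ h) v) := by
      have hmm : h * (h⁻¹ * g * h)⁻¹ = g⁻¹ * h := by group
      calc (V.ρ h) ((V.ρ (h⁻¹ * g * h)⁻¹) v)
          = (V.ρ (h * (h⁻¹ * g * h)⁻¹)) v := by rw [map_mul]; rfl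
        _ = (V.ρ (g⁻¹ * h)) v := by rw [hmm]
        _ = (V.ρ g⁻¹) ((V.ρ h) v) := by rw [map_mul]; rfl
    rw [h1]
  let e : V ⟶ V := ⟨FGModuleCat.ofHom T, fun g => by
    apply FGModuleCat.hom_ext
    simp [FDRep.hom_hom_action_ρ]
    exact comm g⟩
  obtain ⟨c, hc⟩ := CategoryTheory.endomorphism_simple_eq_smul_id (𝕜 := ℂ) e
  have hThom : T = c • LinearMap.id := by
    have h2 := congrArg (fun φ : V ⟶ V => φ.hom.hom.hom) hc
    simp only [Action.smul_hom, Action.id_hom] at h2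
    exact h2.symm
  have htr : LinearMap.trace ℂ V T = 0 := by
    rw [hT, map_sum]
    simp only [map_smul, smul_eq_mul]
    exact h0
  rw [hThom, map_smul, LinearMap.trace_id, smul_eq_mul] at htr
  haveI hnt : Nontrivial V := by
    by_contra hc2
    haveI hsub : Subsingleton V := not_nontrivial_iff_subsingleton.mp hc2
    have : (𝟙 V : V ⟶ V) = 0 := by
      apply Action.hom_ext
      apply FGModuleCat.hom_ext
      apply LinearMap.ext
      intro v
      haveI : Subsingleton ↑V.V.obj := hsub
      exact Subsingleton.elim _ _
    exact CategoryTheory.id_nonzero V this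
  have hfr : (finrank ℂ V : ℂ) ≠ 0 := by
    have h5 := finrank_pos (R := ℂ) (M := V)
    exact_mod_cast Nat.cast_ne_zero.mpr h5.ne'
  have hc0 : c = 0 := by
    rcases mul_eq_zero.mp htr with h | h
    · exact h
    · exact absurd h hfr
  rw [hThom, hc0, zero_smul]

lemma rho_mul {V : Type} [AddCommGroup V] [Module ℂ V] (ρ : Representation ℂ G V)
    (a b : G) (w : V) : ρ (a * b) w = ρ a (ρ b w) := by rw [map_mul]; rfl

/-- Subrepresentation on an invariant submodule. -/
def subRep {V : Type} [AddCommGroup V] [Module ℂ V] (ρ : Representation ℂ G V)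
    (U : Submodule ℂ V) (hU : ∀ g : G, ∀ x ∈ U, ρ g x ∈ U) : Representation ℂ G U where
  toFun g := (ρ g).restrict (hU g)
  map_one' := by
    ext x
    simp [LinearMap.restrict_apply]
  map_mul' g h := by
    ext x
    simp [LinearMap.restrict_apply, Module.End.mul_apply]

lemma subRep_apply {V : Type} [AddCommGroup V] [Module ℂ V] (ρ : Representation ℂ G V)
    (U : Submodule ℂ V) (hU : ∀ g : G, ∀ x ∈ U, ρ g x ∈ U) (g : G) (x : U) :
    ((subRep ρ U hU g x : U) : V) = ρ g (x : V) := rfl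

/-- Maschke: an invariant subspace has an invariant complement. -/
lemma maschke {V : Type} [AddCommGroup V] [Module ℂ V] [FiniteDimensional ℂ V]
    (ρ : Representation ℂ G V) (U : Submodule ℂ V) (hU : ∀ g : G, ∀ x ∈ U, ρ g x ∈ U) :
    ∃ U' : Submodule ℂ V, (∀ g : G, ∀ x ∈ U', ρ g x ∈ U') ∧ IsCompl U U' := by
  obtain ⟨W, hW⟩ := Submodule.exists_isCompl U
  set π₀ : V →ₗ[ℂ] V := U.subtype ∘ₗ (U.linearProjOfIsCompl W hW) with hπ₀
  have hπ₀mem : ∀ x : V, π₀ x ∈ U := fun x => (U.linearProjOfIsCompl W hW x).2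
  have hπ₀id : ∀ x ∈ U, π₀ x = x := by
    intro x hx
    simp [hπ₀, Submodule.linearProjOfIsCompl_apply_left hW ⟨x, hx⟩]
    exact congrArg Subtype.val (Submodule.linearProjOfIsCompl_apply_left hW ⟨x, hx⟩)
  set q : V →ₗ[ℂ] V :=
    (Fintype.card G : ℂ)⁻¹ • ∑ g : G, (ρ g⁻¹) ∘ₗ π₀ ∘ₗ (ρ g) with hq
  have hq1 : ∀ x : V, q x ∈ U := by
    intro x
    rw [hq]
    simp only [LinearMap.smul_apply, LinearMap.sum_apply, LinearMap.comp_apply]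
    refine Submodule.smul_mem _ _ (Submodule.sum_mem _ fun g _ => ?_)
    exact hU g⁻¹ _ (hπ₀mem _)
  have hq2 : ∀ x ∈ U, q x = x := by
    intro x hx
    rw [hq]
    simp only [LinearMap.smul_apply, LinearMap.sum_apply, LinearMap.comp_apply]
    have : ∀ g : G, (ρ g⁻¹) (π₀ ((ρ g) x)) = x := by
      intro g
      rw [hπ₀id _ (hU g x hx)]
      calc (ρ g⁻¹) ((ρ g) x) = (ρ (g⁻¹ * g)) x := by rw [map_mul]; rfl
        _ = x := by simp
    rw [Finset.sum_congr rfl fun g _ => this g, Finset.sum_const, Finset.card_univ,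
      show (Fintype.card G) • x = (Fintype.card G : ℂ) • x from
        (Nat.cast_smul_eq_nsmul ℂ _ x).symm,
      smul_smul, inv_mul_cancel₀ (card_ne_zero_C G), one_smul]
  have hq3 : ∀ (h : G) (v : V), q ((ρ h) v) = (ρ h) (q v) := by
    intro h v
    rw [hq]
    simp only [LinearMap.smul_apply, LinearMap.sum_apply, LinearMap.comp_apply, map_smul, map_sum]
    congr 1
    refine Fintype.sum_equiv (Equiv.mulRight h) _ _ (fun x => ?_)
    simp only [Equiv.coe_mulRight]
    rw [← rho_mul ρ x h v, ← rho_mul ρ h (x*h)⁻¹ (π₀ ((ρ (x*h)) v)),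
      show h * (x*h)⁻¹ = x⁻¹ by group]
  refine ⟨LinearMap.ker q, ?_, ?_⟩
  · intro g x hx
    rw [LinearMap.mem_ker] at hx ⊢
    rw [hq3 g x, hx, map_zero]
  · constructor
    · rw [disjoint_iff]
      ext x
      simp only [Submodule.mem_inf, Submodule.mem_bot]
      constructor
      · rintro ⟨h1, h2⟩
        rw [LinearMap.mem_ker] at h2
        rw [← hq2 x h1, h2]
      · rintro rfl
        exact ⟨Submodule.zero_mem _, Submodule.zero_mem _⟩
    · rw [codisjoint_iff, eq_top_iff]
      intro x _
      have hker : x - q x ∈ LinearMap.ker q := by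
        rw [LinearMap.mem_ker, map_sub, hq2 (q x) (hq1 x), sub_self]
      exact Submodule.mem_sup.mpr ⟨q x, hq1 x, x - q x, hker, by abel⟩

open CategoryTheory in
lemma simple_of_invariants {V : Type} [AddCommGroup V] [Module ℂ V] [FiniteDimensional ℂ V]
    [Nontrivial V] (ρ : Representation ℂ G V)
    (h : ∀ U : Submodule ℂ V, (∀ g : G, ∀ x ∈ U, ρ g x ∈ U) → U = ⊥ ∨ U = ⊤) :
    Simple (FDRep.of ρ) := by
  constructor
  intro Y f hm
  haveI := hm
  constructor
  · intro hiso h0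
    have h1 : (𝟙 (FDRep.of ρ) : _ ⟶ _) = 0 := by
      calc (𝟙 (FDRep.of ρ) : _ ⟶ _) = CategoryTheory.inv f ≫ f :=
            (CategoryTheory.IsIso.inv_hom_id f).symm
        _ = CategoryTheory.inv f ≫ 0 := congrArg (fun t => CategoryTheory.inv f ≫ t) h0
        _ = 0 := CategoryTheory.Limits.comp_zero
    have h2 := congrArg (fun φ : FDRep.of ρ ⟶ FDRep.of ρ => φ.hom.hom.hom) h1
    simp only [Action.id_hom, Action.zero_hom] at h2
    obtain ⟨v, w, hvw⟩ := exists_pair_ne V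
    apply hvw
    have hv : v = 0 := DFunLike.congr_fun h2 v
    have hw : w = 0 := DFunLike.congr_fun h2 w
    rw [hv, hw]
  · intro hne
    -- the kernel of f.hom.hom.hom is an invariant subspace of Y
    have hker : ∀ g : G, ∀ x ∈ LinearMap.ker f.hom.hom.hom, Y.ρ g x ∈ LinearMap.ker f.hom.hom.hom := by
      intro g x hx
      rw [LinearMap.mem_ker] at hx ⊢
      have hcomm := f.comm g
      have h3 : f.hom.hom.hom ((Y.ρ g) x) = ((FDRep.of ρ).ρ g) (f.hom.hom.hom x) := DFunLike.congr_fun (congrArg (fun φ => φ.hom.hom) hcomm) x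
      exact h3.trans (by rw [hx, map_zero])
    have hKbot : LinearMap.ker f.hom.hom.hom = ⊥ := by
      by_contra hKne
      obtain ⟨x, hxK, hx0⟩ := Submodule.exists_mem_ne_zero_of_ne_bot hKne
      let k : FDRep.of (subRep Y.ρ (LinearMap.ker f.hom.hom.hom) hker) ⟶ Y :=
        ⟨FGModuleCat.ofHom (LinearMap.ker f.hom.hom.hom).subtype, fun g => rfl⟩
      have hk0 : k ≫ f = 0 := by
        apply Action.hom_ext
        rw [Action.comp_hom, Action.zero_hom]
        apply FGModuleCat.hom_ext
        apply LinearMap.ext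
        intro u
        have : f.hom.hom.hom ((LinearMap.ker f.hom.hom.hom).subtype u) = 0 := u.2
        exact this
      have hkz : k = 0 := by
        have := (cancel_mono (f := f) (g := k) (h := 0)).mp (by rw [hk0, Limits.zero_comp])
        exact this
      have := congrArg (fun φ : FDRep.of (subRep Y.ρ (LinearMap.ker f.hom.hom.hom) hker) ⟶ Y => φ.hom.hom.hom) hkz
      simp only [Action.zero_hom] at this
      apply hx0
      have hxv := DFunLike.congr_fun this (⟨x, hxK⟩ : LinearMap.ker f.hom.hom.hom)
      exact hxv
    have hinj : Function.Injective f.hom.hom.hom := LinearMap.ker_eq_bot.mp hKbot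
    have hrange : ∀ g : G, ∀ x ∈ LinearMap.range f.hom.hom.hom, ρ g x ∈ LinearMap.range f.hom.hom.hom := by
      intro g x hx
      obtain ⟨y, rfl⟩ := hx
      refine ⟨Y.ρ g y, ?_⟩
      exact DFunLike.congr_fun (congrArg (fun φ => φ.hom.hom) (f.comm g)) y
    rcases h _ hrange with hb | ht
    · exact absurd (Action.hom_ext f 0 (FGModuleCat.hom_ext (LinearMap.range_eq_bot.mp hb))) hne
    · have hsurj : Function.Surjective f.hom.hom.hom := LinearMap.range_eq_top.mp ht
      let e := LinearEquiv.ofBijective f.hom.hom.hom ⟨hinj, hsurj⟩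
      have hcomm' : ∀ g : G, (e.symm.toLinearMap) ∘ₗ ρ g = Y.ρ g ∘ₗ e.symm.toLinearMap := by
        intro g
        apply LinearMap.ext
        intro v
        apply hinj
        show f.hom.hom.hom (e.symm ((ρ g) v)) = f.hom.hom.hom ((Y.ρ g) (e.symm v))
        have h4 : ∀ w, f.hom.hom.hom (e.symm w) = w := fun w => e.apply_symm_apply w
        have hc : f.hom.hom.hom ((Y.ρ g) (e.symm v)) = ((FDRep.of ρ).ρ g) (f.hom.hom.hom (e.symm v)) :=
          DFunLike.congr_fun (congrArg (fun φ => φ.hom.hom) (f.comm g)) (e.symm v)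
        calc f.hom.hom.hom (e.symm ((ρ g) v)) = (ρ g) v := h4 _
          _ = (ρ g) (f.hom.hom.hom (e.symm v)) := by rw [h4]
          _ = f.hom.hom.hom ((Y.ρ g) (e.symm v)) := hc.symm
      let ginv : FDRep.of ρ ⟶ Y := ⟨FGModuleCat.ofHom e.symm.toLinearMap, fun g => FGModuleCat.hom_ext (hcomm' g)⟩
      refine ⟨⟨ginv, ?_, ?_⟩⟩
      · apply Action.hom_ext
        rw [Action.comp_hom, Action.id_hom]
        apply FGModuleCat.hom_ext
        apply LinearMap.ext
        intro v
        show e.symm (f.hom.hom.hom v) = v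
        exact e.symm_apply_apply v
      · apply Action.hom_ext
        rw [Action.comp_hom, Action.id_hom]
        apply FGModuleCat.hom_ext
        apply LinearMap.ext
        intro v
        show f.hom.hom.hom (e.symm v) = v
        exact e.apply_symm_apply v

lemma sum_vanish_on (f : G → ℂ) {V : Type} [AddCommGroup V] [Module ℂ V]
    (ρ : Representation ℂ G V) (U : Submodule ℂ V) (hU : ∀ g : G, ∀ x ∈ U, ρ g x ∈ U)
    (h : (∑ g : G, f g • (subRep ρ U hU g⁻¹ : U →ₗ[ℂ] U)) = 0) :
    ∀ x ∈ U, (∑ g : G, f g • (ρ g⁻¹ : V →ₗ[ℂ] V)) x = 0 := by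
  intro x hx
  have h5 := DFunLike.congr_fun h (⟨x, hx⟩ : U)
  have h6 := congrArg (U.subtype) h5
  simp only [LinearMap.sum_apply, LinearMap.smul_apply, map_sum, map_smul, map_zero,
    LinearMap.zero_apply] at h6 ⊢
  calc ∑ g : G, f g • (ρ g⁻¹) x
      = ∑ g : G, f g • (U.subtype ((subRep ρ U hU g⁻¹) ⟨x, hx⟩)) := rfl
    _ = 0 := h6

lemma stepB (f : G → ℂ) (hf : ∀ h g : G, f (h * g * h⁻¹) = f g)
    (h0 : ∀ χ ∈ irrChars G, ∑ g : G, f g * χ g⁻¹ = 0) :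
    ∀ (n : ℕ) (V : Type) (_ : AddCommGroup V) (_ : Module ℂ V) (_ : FiniteDimensional ℂ V)
      (ρ : Representation ℂ G V), Module.finrank ℂ V = n →
      (∑ g : G, f g • (ρ g⁻¹ : V →ₗ[ℂ] V)) = 0 := by
  intro n
  induction n using Nat.strong_induction_on with
  | _ n IH =>
    intro V _ _ _ ρ hrank
    rcases Nat.eq_zero_or_pos n with h00 | hpos
    · subst h00
      haveI : Subsingleton V := Module.finrank_zero_iff.mp hrank
      apply LinearMap.ext; intro v; exact Subsingleton.elim _ _
    · haveI hnt : Nontrivial V := by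
        refine Module.finrank_pos_iff (R := ℂ) (M := V) |>.mp ?_
        rw [hrank]; exact hpos
      obtain ⟨U, hPU, hUmin⟩ : ∃ U : Submodule ℂ V,
          ((∀ g : G, ∀ x ∈ U, ρ g x ∈ U) ∧ U ≠ ⊥) ∧
          ∀ U' : Submodule ℂ V, ((∀ g : G, ∀ x ∈ U', ρ g x ∈ U') ∧ U' ≠ ⊥) →
            Module.finrank ℂ U ≤ Module.finrank ℂ U' := by
        set S : Set ℕ := {k | ∃ U : Submodule ℂ V,
          ((∀ g : G, ∀ x ∈ U, ρ g x ∈ U) ∧ U ≠ ⊥) ∧ Module.finrank ℂ U = k} with hSdef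
        have hS : S.Nonempty := ⟨Module.finrank ℂ (⊤ : Submodule ℂ V),
          ⊤, ⟨fun g x _ => Submodule.mem_top, top_ne_bot⟩, rfl⟩
        obtain ⟨U, hU, hUk⟩ := Nat.sInf_mem hS
        exact ⟨U, hU, fun U' hU' => by
          rw [hUk]; exact Nat.sInf_le ⟨U', hU', rfl⟩⟩
      obtain ⟨hUinv, hUne⟩ := hPU
      haveI : Nontrivial U := Submodule.nontrivial_iff_ne_bot.mpr hUne
      haveI hsimp : CategoryTheory.Simple (FDRep.of (subRep ρ U hUinv)) := by
        apply simple_of_invariants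
        intro W hWinv
        by_cases hWbot : W = ⊥
        · exact Or.inl hWbot
        · refine Or.inr ?_
          have hmapinv : ∀ g : G, ∀ x ∈ W.map U.subtype, ρ g x ∈ W.map U.subtype := by
            intro g x hx
            obtain ⟨u, huW, rfl⟩ := hx
            exact ⟨subRep ρ U hUinv g u, hWinv g u huW, rfl⟩
          have hmapne : W.map U.subtype ≠ ⊥ := by
            intro hb
            apply hWbot
            apply Submodule.map_injective_of_injective (Submodule.injective_subtype U)
            rw [hb, Submodule.map_bot]
          have hle := hUmin (W.map U.subtype) ⟨hmapinv, hmapne⟩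
          rw [Submodule.finrank_map_subtype_eq] at hle
          exact Submodule.eq_top_of_finrank_eq (le_antisymm (Submodule.finrank_le W) hle)
      have hchar : FDRep.character (FDRep.of (subRep ρ U hUinv)) ∈ irrChars G :=
        (mem_irrChars G).mpr ⟨_, hsimp, rfl⟩
      have hAzero : (∑ g : G, f g • (subRep ρ U hUinv g⁻¹ : U →ₗ[ℂ] U)) = 0 :=
        stepA f (FDRep.of (subRep ρ U hUinv)) hf (h0 _ hchar)
      have hTU := sum_vanish_on f ρ U hUinv hAzero
      obtain ⟨U', hU'inv, hcompl⟩ := maschke ρ U hUinv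
      have hrank' : Module.finrank ℂ U' < n := by
        have hsum := Submodule.finrank_add_eq_of_isCompl hcompl
        have hUpos : 0 < Module.finrank ℂ U := Module.finrank_pos
        rw [hrank] at hsum
        omega
      have hA'zero := IH (Module.finrank ℂ U') hrank' U' inferInstance inferInstance
        inferInstance (subRep ρ U' hU'inv) rfl
      have hTU' := sum_vanish_on f ρ U' hU'inv hA'zero
      apply LinearMap.ext
      intro v
      have hv : v ∈ U ⊔ U' := by
        rw [hcompl.sup_eq_top]; trivial
      obtain ⟨y, hy, z, hz, rfl⟩ := Submodule.mem_sup.mp hv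
      rw [map_add, hTU y hy, hTU' z hz, add_zero, LinearMap.zero_apply]

lemma span_zero (f : G → ℂ) (hf : ∀ h g : G, f (h * g * h⁻¹) = f g)
    (h0 : ∀ χ ∈ irrChars G, ∑ g : G, f g * χ g⁻¹ = 0) : f = 0 := by
  haveI hfd : FiniteDimensional ℂ (MonoidAlgebra ℂ G) :=
    ((Finsupp.linearEquivFunOnFinite ℂ ℂ G).symm.trans
      (MonoidAlgebra.coeffLinearEquiv ℂ).symm).finiteDimensional
  have hB := stepB f hf h0 (Module.finrank ℂ (MonoidAlgebra ℂ G)) (MonoidAlgebra ℂ G) inferInstance inferInstance hfd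
    (Representation.ofMulAction ℂ G G) rfl
  funext h
  have h1 := DFunLike.congr_fun hB (MonoidAlgebra.single (1 : G) (1 : ℂ))
  simp only [LinearMap.sum_apply, LinearMap.smul_apply, LinearMap.zero_apply] at h1
  have h2 : ∀ g : G, (Representation.ofMulAction ℂ G G g⁻¹) (MonoidAlgebra.single (1 : G) (1 : ℂ))
      = MonoidAlgebra.single g⁻¹ (1 : ℂ) := by
    intro g
    rw [Representation.ofMulAction_single]
    congr 1
    simp [smul_eq_mul]
  rw [Finset.sum_congr rfl (fun g _ => by rw [h2 g])] at h1
  have h3 := congrArg (fun σ : MonoidAlgebra ℂ G => σ.coeff h⁻¹) h1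
  simp only [MonoidAlgebra.coeff_sum, MonoidAlgebra.coeff_smul, MonoidAlgebra.coeff_single,
    MonoidAlgebra.coeff_zero, Finsupp.finset_sum_apply, Finsupp.smul_apply, Finsupp.single_apply,
    Finsupp.coe_zero, Pi.zero_apply, smul_eq_mul, mul_ite, mul_one, mul_zero,
    inv_inj] at h3
  rw [Finset.sum_ite_eq' Finset.univ h f] at h3
  simpa using h3

/-- class size of t as a finset cardinality -/
def clsize (t : G) : ℕ := (Finset.univ.filter fun g : G => IsConj t g).card

lemma clsize_pos (t : G) : 0 < clsize t := by
  refine Finset.card_pos.mpr ⟨t, ?_⟩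
  simp only [clsize, Finset.mem_filter, Finset.mem_univ, true_and]
  exact IsConj.refl t

lemma char_class_fn {χ : G → ℂ} (hχ : IsIrrChar G χ) (h g : G) : χ (h * g * h⁻¹) = χ g := by
  obtain ⟨V, _, rfl⟩ := hχ
  exact FDRep.char_conj V g h

lemma char_isConj {χ : G → ℂ} (hχ : IsIrrChar G χ) {a b : G} (hab : IsConj a b) : χ a = χ b := by
  obtain ⟨c, hc⟩ := isConj_iff.mp hab
  rw [← hc, char_class_fn hχ]

lemma sum_sq (t : G) :
    ∑ χ ∈ irrChars G, (χ t)^2 =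
      if IsConj t t⁻¹ then (Fintype.card G : ℂ) / (clsize t : ℂ) else 0 := by
  set m : ℂ := (clsize t : ℂ) with hm
  have hm0 : m ≠ 0 := by
    rw [hm]
    exact_mod_cast Nat.cast_ne_zero.mpr (clsize_pos (G := G) t).ne'
  set F : G → ℂ := fun g =>
    (∑ χ ∈ irrChars G, χ t * χ g) - (if IsConj t g⁻¹ then (Fintype.card G : ℂ) / m else 0)
    with hF
  have hclass : ∀ h g : G, F (h * g * h⁻¹) = F g := by
    intro h g
    rw [hF]
    simp only
    congr 1
    · exact Finset.sum_congr rfl fun χ hχ => by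
        rw [char_class_fn ((mem_irrChars G).mp hχ) h g]
    · have : IsConj t (h * g * h⁻¹)⁻¹ ↔ IsConj t g⁻¹ := by
        constructor
        · intro hc
          refine hc.trans ?_
          have : (h * g * h⁻¹)⁻¹ = h * g⁻¹ * h⁻¹ := by group
          rw [this]
          exact (isConj_iff.mpr ⟨h, rfl⟩).symm
        · intro hc
          refine hc.trans ?_
          have : (h * g * h⁻¹)⁻¹ = h * g⁻¹ * h⁻¹ := by group
          rw [this]
          exact isConj_iff.mpr ⟨h, rfl⟩
      exact if_congr this rfl rfl
  have horth : ∀ ψ ∈ irrChars G, ∑ g : G, F g * ψ g⁻¹ = 0 := by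
    intro ψ hψ
    have hψ' := (mem_irrChars G).mp hψ
    rw [hF]
    simp only [sub_mul, Finset.sum_sub_distrib]
    have e1 : ∑ g : G, (∑ χ ∈ irrChars G, χ t * χ g) * ψ g⁻¹ = ψ t * (Fintype.card G : ℂ) := by
      have : ∀ g : G, (∑ χ ∈ irrChars G, χ t * χ g) * ψ g⁻¹
          = ∑ χ ∈ irrChars G, χ t * (χ g * ψ g⁻¹) := by
        intro g
        rw [Finset.sum_mul]
        exact Finset.sum_congr rfl fun χ _ => by ring
      rw [Finset.sum_congr rfl fun g _ => this g, Finset.sum_comm]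
      have : ∀ χ ∈ irrChars G, ∑ g : G, χ t * (χ g * ψ g⁻¹)
          = if χ = ψ then χ t * (Fintype.card G : ℂ) else 0 := by
        intro χ hχ
        rw [← Finset.mul_sum, orth_full G ((mem_irrChars G).mp hχ) hψ']
        split_ifs <;> simp
      rw [Finset.sum_congr rfl this, Finset.sum_ite_eq' (irrChars G) ψ
        (fun χ => χ t * (Fintype.card G : ℂ)), if_pos hψ]
    have e2 : ∑ g : G, (if IsConj t g⁻¹ then (Fintype.card G : ℂ) / m else 0) * ψ g⁻¹
        = ψ t * (Fintype.card G : ℂ) := by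
      have hinv : ∑ g : G, (if IsConj t g⁻¹ then (Fintype.card G : ℂ) / m else 0) * ψ g⁻¹
          = ∑ g : G, (if IsConj t g then (Fintype.card G : ℂ) / m else 0) * ψ g := by
        refine Fintype.sum_equiv (Equiv.inv G) _ _ (fun x => ?_)
        simp [Equiv.inv_apply]
      rw [hinv]
      have : ∀ g : G, (if IsConj t g then (Fintype.card G : ℂ) / m else 0) * ψ g
          = if IsConj t g then ((Fintype.card G : ℂ) / m) * ψ t else 0 := by
        intro g
        split_ifs with hc
        · rw [char_isConj hψ' hc.symm]  -- careful direction
        · rw [zero_mul]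
      rw [Finset.sum_congr rfl fun g _ => this g, Finset.sum_ite, Finset.sum_const_zero,
        add_zero, Finset.sum_const]
      rw [show (Finset.univ.filter fun g : G => IsConj t g).card = clsize t from rfl]
      rw [nsmul_eq_mul]
      rw [← hm]  -- (m) * (N/m * ψ t)
      field_simp
    rw [e1, e2, sub_self]
  have hFz := span_zero F hclass horth
  have hFt := congrFun hFz t
  rw [hF] at hFt
  simp only [Pi.zero_apply] at hFt
  have : ∑ χ ∈ irrChars G, χ t * χ t = if IsConj t t⁻¹ then (Fintype.card G : ℂ) / m else 0 :=
    sub_eq_zero.mp hFt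
  rw [← this]
  exact Finset.sum_congr rfl fun χ _ => (sq (χ t)).symm ▸ by ring

end Span

section Assemble
variable (G : Type) [Group G] [Fintype G]

/-- the central function S(t) = Σ_χ χ(t)² -/
def Sfun : G → ℂ := fun t =>
  if IsConj t t⁻¹ then (Fintype.card G : ℂ) / (clsize t : ℂ) else 0

lemma A_eval (n : ℕ) :
    (∑ᶠ χs ∈ {χs : Fin n → (G → ℂ) | ∀ i, IsIrrChar G (χs i)},
        charInner G 1 (∏ i, (χs i) ^ 2)) =
    (Fintype.card G : ℂ)⁻¹ * ∑ t : G, (Sfun G t)^n := by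
  have hset : {χs : Fin n → (G → ℂ) | ∀ i, IsIrrChar G (χs i)}
      = ↑(Fintype.piFinset fun _ : Fin n => irrChars G) := by
    ext χs
    simp [Fintype.mem_piFinset, mem_irrChars]
  rw [hset, finsum_mem_coe_finset]
  have hterm : ∀ χs ∈ Fintype.piFinset (fun _ : Fin n => irrChars G),
      charInner G 1 (∏ i, (χs i) ^ 2)
        = (Fintype.card G : ℂ)⁻¹ * ∑ t : G, ∏ i : Fin n, (starRingEnd ℂ) ((χs i t)^2) := by
    intro χs _
    unfold charInner
    congr 1
    refine Finset.sum_congr rfl fun t _ => ?_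
    rw [Pi.one_apply, one_mul]
    rw [show (∏ i, (χs i) ^ 2) t = ∏ i : Fin n, (χs i t)^2 by
      rw [Finset.prod_apply]; exact Finset.prod_congr rfl fun i _ => rfl]
    rw [map_prod]
  rw [Finset.sum_congr rfl hterm, ← Finset.mul_sum]
  congr 1
  rw [Finset.sum_comm]
  refine Finset.sum_congr rfl fun t _ => ?_
  rw [← Finset.prod_univ_sum (fun _ : Fin n => irrChars G)
    (fun _ (χ : G → ℂ) => (starRingEnd ℂ) ((χ t)^2))]
  have hS : ∑ χ ∈ irrChars G, (starRingEnd ℂ) ((χ t)^2) = Sfun G t := by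
    rw [← map_sum, sum_sq]
    unfold Sfun
    split_ifs with hc
    · rw [map_div₀]; simp
    · simp
  rw [Finset.prod_congr rfl (fun _ _ => hS), Finset.prod_const, Finset.card_univ,
    Fintype.card_fin]

variable {G}

lemma isConj_inv {a b : G} (h : IsConj a b) : IsConj a⁻¹ b⁻¹ := by
  obtain ⟨c, hc⟩ := isConj_iff.mp h
  exact isConj_iff.mpr ⟨c, by rw [← hc]; group⟩

lemma real_iff (t : G) : IsConj t t⁻¹ ↔ IsRealClass G (ConjClasses.mk t) := by
  constructor
  · intro h g hg
    rw [ConjClasses.mem_carrier_iff_mk_eq] at hg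
    have hgt : IsConj g t := ConjClasses.mk_eq_mk_iff_isConj.mp hg
    exact (hgt.trans h).trans (isConj_inv hgt.symm)
  · intro h
    exact h t (ConjClasses.mem_carrier_iff_mk_eq.mpr rfl)

lemma carrier_eq_setOf (t : G) : (ConjClasses.mk t).carrier = {g : G | IsConj t g} := by
  ext g
  rw [ConjClasses.mem_carrier_iff_mk_eq, ConjClasses.mk_eq_mk_iff_isConj]
  exact ⟨fun h => h.symm, fun h => h.symm⟩

lemma clsize_eq_ncard (t : G) : clsize t = (ConjClasses.mk t).carrier.ncard := by
  rw [carrier_eq_setOf, Set.ncard_eq_toFinset_card']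
  simp [clsize]

lemma carrier_fiber (C : ConjClasses G) :
    (Finset.univ.filter fun t : G => ConjClasses.mk t = C).card = C.carrier.ncard := by
  have : C.carrier = {t : G | ConjClasses.mk t = C} := by
    ext g; exact ConjClasses.mem_carrier_iff_mk_eq
  rw [this, Set.ncard_eq_toFinset_card']
  simp

lemma ncard_mem_Icc (C : ConjClasses G) :
    C.carrier.ncard ∈ Finset.Icc 1 (Fintype.card G) := by
  obtain ⟨t, rfl⟩ := ConjClasses.mk_surjective C
  rw [← clsize_eq_ncard]
  rw [Finset.mem_Icc]
  exact ⟨clsize_pos t, (Finset.card_filter_le _ _).trans (by simp)⟩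

variable (G)

def kcount (c : ℕ) : ℕ := ((Finset.univ : Finset (ConjClasses G)).filter
  fun C => C.carrier.ncard = c ∧ IsRealClass G C).card

lemma sum_S_pow (n : ℕ) (hn : 1 ≤ n) :
    ∑ t : G, (Sfun G t)^n
      = ∑ c ∈ Finset.Icc 1 (Fintype.card G),
          (kcount G c : ℂ) * ((c : ℂ) * ((Fintype.card G : ℂ)/(c : ℂ))^n) := by
  have h1 : ∑ t : G, (Sfun G t)^n
      = ∑ C : ConjClasses G, (C.carrier.ncard : ℂ) *
          ((if IsRealClass G C then (Fintype.card G : ℂ)/(C.carrier.ncard : ℂ) else 0)^n) := by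
    rw [← Finset.sum_fiberwise Finset.univ (fun t : G => ConjClasses.mk t)
      (fun t => (Sfun G t)^n)]
    refine Finset.sum_congr rfl fun C _ => ?_
    have hconst : ∀ t ∈ Finset.univ.filter (fun t : G => ConjClasses.mk t = C),
        (Sfun G t)^n = (if IsRealClass G C then
          (Fintype.card G : ℂ)/(C.carrier.ncard : ℂ) else 0)^n := by
      intro t ht
      have hmk : ConjClasses.mk t = C := (Finset.mem_filter.mp ht).2
      unfold Sfun
      rw [clsize_eq_ncard, hmk]
      rw [← hmk]
      exact congrArg (· ^ n) (if_congr (real_iff t) rfl rfl)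
    rw [Finset.sum_congr rfl hconst, Finset.sum_const, carrier_fiber, nsmul_eq_mul]
  rw [h1]
  rw [← Finset.sum_fiberwise_of_maps_to (g := fun C : ConjClasses G => C.carrier.ncard)
    (fun C _ => ncard_mem_Icc C)]
  refine Finset.sum_congr rfl fun c hc => ?_
  have hterm : ∀ C ∈ Finset.univ.filter (fun C : ConjClasses G => C.carrier.ncard = c),
      (C.carrier.ncard : ℂ) *
          ((if IsRealClass G C then (Fintype.card G : ℂ)/(C.carrier.ncard : ℂ) else 0)^n)
        = if IsRealClass G C then (c : ℂ) * ((Fintype.card G : ℂ)/(c : ℂ))^n else 0 := by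
    intro C hC
    have hcc : C.carrier.ncard = c := (Finset.mem_filter.mp hC).2
    rw [hcc]
    split_ifs with hr
    · rfl
    · rw [zero_pow (by omega), mul_zero]
  rw [Finset.sum_congr rfl hterm, Finset.sum_ite, Finset.sum_const_zero, add_zero,
    Finset.sum_const, Finset.filter_filter, nsmul_eq_mul]
  rfl

end Assemble

lemma lagrange_vanish {N : ℕ} (hN : 0 < N) (d : ℕ → ℂ)
    (hd : ∀ n, 1 ≤ n → n ≤ N → ∑ c ∈ Finset.Icc 1 N, d c * ((N:ℂ)/(c:ℂ))^n = 0) :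
    ∀ c0 ∈ Finset.Icc 1 N, d c0 = 0 := by
  intro c0 hc0
  have hNz : (N:ℂ) ≠ 0 := Nat.cast_ne_zero.mpr hN.ne'
  set v : ℕ → ℂ := fun c => (N:ℂ)/(c:ℂ) with hv
  have hvnz : ∀ c ∈ Finset.Icc 1 N, v c ≠ 0 := by
    intro c hc
    rw [Finset.mem_Icc] at hc
    have : (c:ℂ) ≠ 0 := Nat.cast_ne_zero.mpr (by omega)
    exact div_ne_zero hNz this
  have hinj : Set.InjOn v (Finset.Icc 1 N) := by
    intro a ha b hb hab
    simp only [Finset.coe_Icc, Set.mem_Icc] at ha hb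
    have haz : (a:ℂ) ≠ 0 := Nat.cast_ne_zero.mpr (by omega)
    have hbz : (b:ℂ) ≠ 0 := Nat.cast_ne_zero.mpr (by omega)
    rw [hv, div_eq_div_iff haz hbz] at hab
    rw [mul_comm (N:ℂ) (b:ℂ)] at hab
    have h1 : (b : ℂ) = (a : ℂ) := mul_left_cancel₀ hNz (by rw [← hab]; ring)
    exact_mod_cast h1.symm
  set P : Polynomial ℂ := Polynomial.X * Lagrange.basis (Finset.Icc 1 N) v c0 with hP
  have hcards : (Finset.Icc 1 N).card = N := by simp
  have hdeg : P.natDegree ≤ N := by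
    rw [hP, Polynomial.natDegree_mul Polynomial.X_ne_zero
      (Lagrange.basis_ne_zero hinj hc0), Polynomial.natDegree_X,
      Lagrange.natDegree_basis hinj hc0, hcards]
    omega
  have heval : ∀ c ∈ Finset.Icc 1 N, P.eval (v c) = if c = c0 then v c0 else 0 := by
    intro c hc
    rw [hP, Polynomial.eval_mul, Polynomial.eval_X]
    by_cases h : c = c0
    · subst h
      rw [Lagrange.eval_basis_self hinj hc, mul_one, if_pos rfl]
    · rw [Lagrange.eval_basis_of_ne (fun hh => h hh.symm) hc, mul_zero, if_neg h]
  have hsum : ∑ c ∈ Finset.Icc 1 N, d c * P.eval (v c) = d c0 * v c0 := by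
    rw [Finset.sum_congr rfl (fun c hc => by rw [heval c hc, mul_ite, mul_zero]),
      Finset.sum_ite_eq' (Finset.Icc 1 N) c0 (fun c => d c * v c0), if_pos hc0]
  have hzero : ∑ c ∈ Finset.Icc 1 N, d c * P.eval (v c) = 0 := by
    have hlt : P.natDegree < N + 1 := by omega
    rw [Finset.sum_congr rfl (fun c _ => by
      rw [Polynomial.eval_eq_sum_range' hlt, Finset.mul_sum])]
    rw [Finset.sum_comm]
    refine Finset.sum_eq_zero fun j hj => ?_
    rw [Finset.mem_range] at hj
    rcases Nat.eq_zero_or_pos j with hj0 | hjpos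
    · subst hj0
      have hc0coeff : P.coeff 0 = 0 := by
        rw [hP, Polynomial.mul_coeff_zero, Polynomial.coeff_X_zero, zero_mul]
      refine Finset.sum_eq_zero fun c _ => ?_
      rw [hc0coeff, zero_mul, mul_zero]
    · have := hd j hjpos (by omega)
      calc ∑ c ∈ Finset.Icc 1 N, d c * (P.coeff j * (v c)^j)
          = P.coeff j * ∑ c ∈ Finset.Icc 1 N, d c * (v c)^j := by
            rw [Finset.mul_sum]
            exact Finset.sum_congr rfl fun c _ => by ring
        _ = 0 := by rw [this, mul_zero]
  rw [hzero] at hsum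
  rcases mul_eq_zero.mp hsum.symm with h | h
  · exact h
  · exact absurd h (hvnz c0 hc0)

lemma count_realClassSizes (G : Type) [Group G] [Fintype G] (c : ℕ) :
    Multiset.count c (realClassSizes G) = kcount G c := by
  unfold realClassSizes kcount
  rw [Multiset.count_map]
  rw [show ((Finset.univ : Finset (ConjClasses G)).filter fun C => IsRealClass G C).val.filter
      (fun C => c = C.carrier.ncard)
    = (((Finset.univ : Finset (ConjClasses G)).filter fun C => IsRealClass G C).filter
      (fun C => c = C.carrier.ncard)).val from rfl]
  rw [Finset.filter_filter]
  have heq : Finset.filter (fun C : ConjClasses G => IsRealClass G C ∧ c = C.carrier.ncard)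
        Finset.univ
      = Finset.filter (fun C : ConjClasses G => C.carrier.ncard = c ∧ IsRealClass G C)
        Finset.univ := by
    refine Finset.filter_congr fun C _ => ?_
    constructor
    · rintro ⟨h1, h2⟩; exact ⟨h2.symm, h1⟩
    · rintro ⟨h1, h2⟩; exact ⟨h2, h1.symm⟩
  rw [heq]
  rfl

lemma kcount_eq_zero (G : Type) [Group G] [Fintype G] {c : ℕ}
    (hc : c ∉ Finset.Icc 1 (Fintype.card G)) : kcount G c = 0 := by
  unfold kcount
  rw [Finset.card_eq_zero, Finset.filter_eq_empty_iff]
  rintro C - ⟨hcc, -⟩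
  exact hc (hcc ▸ ncard_mem_Icc C)

/-- If `|G| = |H|` and, for every `1 ≤ n ≤ |G|`, the total multiplicity of the
trivial character in the products `χ₁² ⋯ χₙ²` over all `n`-tuples of irreducible characters
agrees for `G` and `H`, then `G` and `H` have the same multiset of real conjugacy class sizes. -/
theorem real_class_sizes_determined
    (G H : Type) [Group G] [Fintype G] [Group H] [Fintype H]
    (hcard : Fintype.card G = Fintype.card H)
    (h : ∀ n : ℕ, 1 ≤ n → n ≤ Fintype.card G →
      (∑ᶠ χs ∈ {χs : Fin n → (G → ℂ) | ∀ i, IsIrrChar G (χs i)},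
        charInner G 1 (∏ i, (χs i) ^ 2)) =
      ∑ᶠ χs ∈ {χs : Fin n → (H → ℂ) | ∀ i, IsIrrChar H (χs i)},
        charInner H 1 (∏ i, (χs i) ^ 2)) :
    realClassSizes G = realClassSizes H := by
  have hNpos : 0 < Fintype.card G := Fintype.card_pos
  have hNzC : ((Fintype.card G : ℕ) : ℂ)⁻¹ ≠ 0 :=
    inv_ne_zero (Nat.cast_ne_zero.mpr hNpos.ne')
  have hkey : ∀ n, 1 ≤ n → n ≤ Fintype.card G →
      ∑ c ∈ Finset.Icc 1 (Fintype.card G),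
        ((kcount G c : ℂ) * c - (kcount H c : ℂ) * c) * ((Fintype.card G : ℂ)/(c:ℂ))^n = 0 := by
    intro n h1 h2
    have hGn := (A_eval G n).symm.trans ((h n h1 h2).trans (A_eval H n))
    rw [sum_S_pow G n h1, sum_S_pow H n h1, ← hcard] at hGn
    have hGn2 := mul_left_cancel₀ hNzC hGn
    calc ∑ c ∈ Finset.Icc 1 (Fintype.card G),
          ((kcount G c : ℂ) * c - (kcount H c : ℂ) * c) * ((Fintype.card G : ℂ)/(c:ℂ))^n
        = (∑ c ∈ Finset.Icc 1 (Fintype.card G),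
            (kcount G c : ℂ) * ((c:ℂ) * ((Fintype.card G : ℂ)/(c:ℂ))^n))
          - ∑ c ∈ Finset.Icc 1 (Fintype.card G),
            (kcount H c : ℂ) * ((c:ℂ) * ((Fintype.card G : ℂ)/(c:ℂ))^n) := by
          rw [← Finset.sum_sub_distrib]
          exact Finset.sum_congr rfl fun c _ => by ring
      _ = 0 := by rw [hGn2, sub_self]
  have hvan := lagrange_vanish hNpos _ hkey
  have hk : ∀ c, kcount G c = kcount H c := by
    intro c
    by_cases hc : c ∈ Finset.Icc 1 (Fintype.card G)
    · have h5 := hvan c hc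
      have hcz : (c:ℂ) ≠ 0 := by
        rw [Finset.mem_Icc] at hc
        exact Nat.cast_ne_zero.mpr (by omega)
      have h3 : (kcount G c : ℂ) * c = (kcount H c : ℂ) * c := sub_eq_zero.mp h5
      have h4 : (kcount G c : ℂ) = kcount H c := mul_right_cancel₀ hcz h3
      exact_mod_cast h4
    · rw [kcount_eq_zero G hc, kcount_eq_zero H (by rwa [← hcard])]
  refine Multiset.ext.mpr fun c => ?_
  rw [count_realClassSizes, count_realClassSizes, hk c]
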